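/- arXiv:1510.04129 — 3 statements merged into one kernel-verified Lean document; each statement's English description precedes it below -/
import Mathlib

section
/- For all 1 ≤ k ≤ n+1 and all 1 ≤ i ≠ j ≤ n+1, the operators on R satisfy H_k∘T_{i,j} − T_{i,j}∘H_k = (δ_{k,i} − δ_{k,j})·T_{i,j}. -/
open MvPolynomial

/-- The generators `h_1, …, h_n` of `R = ℂ[h_1,…,h_n]`, together with
`h_{n+1} := -(h_1 + ⋯ + h_n)`.  Indices: `i : Fin (n+1)` with `(i : ℕ) < n`
corresponding to `h_1, …, h_n` and `i = Fin.last n` to `h_{n+1}`. -/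
noncomputable def Hp (n : ℕ) (i : Fin (n + 1)) : MvPolynomial (Fin n) ℂ :=
  if h : (i : ℕ) < n then X ⟨i, h⟩ else -∑ j : Fin n, X j

/-- The automorphism `σ_i` of `R` determined by `σ_i(h_k) = h_k - δ_{k,i}` for `1 ≤ i ≤ n`,
and `σ_{n+1} = id`. -/
noncomputable def sigma (n : ℕ) (i : Fin (n + 1)) :
    MvPolynomial (Fin n) ℂ ≃ₐ[ℂ] MvPolynomial (Fin n) ℂ :=
  if h : (i : ℕ) < n then
    AlgEquiv.ofAlgHom
      (aeval fun k => X k - if k = ⟨i, h⟩ then 1 else 0)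
      (aeval fun k => X k + if k = ⟨i, h⟩ then 1 else 0)
      (by ext k : 1; by_cases hk : k = ⟨i, h⟩ <;> simp [hk])
      (by ext k : 1; by_cases hk : k = ⟨i, h⟩ <;> simp [hk])
  else AlgEquiv.refl

/-- The operator `T_{i,j}` on `R`:
`T_{i,j}(f) = a_i a_j⁻¹ (δ_{i∈S} + δ_{i∉S}(h_i - b - 1)) (δ_{j∈S}(h_j - b) + δ_{j∉S}) σ_i(σ_j⁻¹(f))`. -/
noncomputable def T (n : ℕ) (b : ℂ) (S : Finset (Fin (n + 1))) (a : Fin (n + 1) → ℂ)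
    (i j : Fin (n + 1)) (f : MvPolynomial (Fin n) ℂ) : MvPolynomial (Fin n) ℂ :=
  (a i * (a j)⁻¹) • ((if i ∈ S then 1 else Hp n i - C b - 1)
    * (if j ∈ S then Hp n j - C b else 1) * sigma n i ((sigma n j).symm f))

lemma sigma_lt_apply (n : ℕ) (i : Fin (n + 1)) (h : (i : ℕ) < n)
    (p : MvPolynomial (Fin n) ℂ) :
    sigma n i p = aeval (fun m : Fin n => X m - if m = ⟨i, h⟩ then 1 else 0) p := by
  unfold sigma; rw [dif_pos h]; rfl

lemma sigma_C (n : ℕ) (i : Fin (n + 1)) (c : ℂ) : sigma n i (C c) = C c := by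
  rw [← MvPolynomial.algebraMap_eq]; exact (sigma n i).commutes c

lemma sigma_Hp (n : ℕ) (i k : Fin (n + 1)) :
    sigma n i (Hp n k) = Hp n k - C (if k = i then 1 else 0)
      + C (if k = Fin.last n then 1 else 0) := by
  by_cases h : (i : ℕ) < n
  · rw [sigma_lt_apply n i h]
    unfold Hp
    by_cases hk : (k : ℕ) < n
    · rw [dif_pos hk]
      have hlast : ¬ k = Fin.last n := by
        intro hh; rw [hh] at hk; simp [Fin.last] at hk
      have heq : ((⟨k, hk⟩ : Fin n) = ⟨i, h⟩) ↔ k = i := by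
        simp [Fin.ext_iff]
      rw [aeval_X, if_neg hlast]
      by_cases hki : k = i
      · rw [if_pos (heq.2 hki), if_pos hki, C_1, C_0]; ring
      · rw [if_neg (fun hh => hki (heq.1 hh)), if_neg hki, C_0]; ring
    · rw [dif_neg hk]
      have hlast : k = Fin.last n := by
        apply Fin.ext
        simpa [Fin.last] using Nat.le_antisymm (Nat.lt_succ_iff.1 k.2) (Nat.le_of_not_lt hk)
      have hki : ¬ k = i := by intro hh; rw [hh] at hk; exact hk h
      rw [map_neg, map_sum]
      simp only [aeval_X]
      rw [Finset.sum_sub_distrib, if_neg hki, if_pos hlast,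
        Finset.sum_ite_eq' Finset.univ (⟨i, h⟩ : Fin n) (fun _ => (1 : MvPolynomial (Fin n) ℂ))]
      simp; ring
  · have hi : i = Fin.last n := by
      apply Fin.ext
      simpa [Fin.last] using Nat.le_antisymm (Nat.lt_succ_iff.1 i.2) (Nat.le_of_not_lt h)
    have : sigma n i = AlgEquiv.refl := by unfold sigma; rw [dif_neg h]
    rw [this, hi]
    simp only [AlgEquiv.coe_refl, id_eq]
    ring

lemma sigma_symm_Hp (n : ℕ) (j k : Fin (n + 1)) :
    (sigma n j).symm (Hp n k) = Hp n k + C (if k = j then 1 else 0)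
      - C (if k = Fin.last n then 1 else 0) := by
  apply (sigma n j).injective
  rw [AlgEquiv.apply_symm_apply, map_sub, map_add, sigma_Hp, sigma_C, sigma_C]
  ring

lemma sigma_sigma_symm_Hp (n : ℕ) (i j k : Fin (n + 1)) :
    sigma n i ((sigma n j).symm (Hp n k))
      = Hp n k + C ((if k = j then 1 else 0) - (if k = i then 1 else 0)) := by
  rw [sigma_symm_Hp, map_sub, map_add, sigma_Hp, sigma_C, sigma_C, C_sub]
  ring

/-- For all `1 ≤ k ≤ n+1` and `1 ≤ i ≠ j ≤ n+1`, the operators on `R` satisfy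
`H_k ∘ T_{i,j} - T_{i,j} ∘ H_k = (δ_{k,i} - δ_{k,j}) T_{i,j}`, where `H_k` is
multiplication by `h_k` (stated pointwise). -/
theorem statement5 (n : ℕ) (hn : 1 ≤ n) (b : ℂ) (S : Finset (Fin (n + 1)))
    (a : Fin (n + 1) → ℂ) (ha : ∀ j, a j ≠ 0) (halast : a (Fin.last n) = 1)
    (k i j : Fin (n + 1)) (hij : i ≠ j) (f : MvPolynomial (Fin n) ℂ) :
    Hp n k * T n b S a i j f - T n b S a i j (Hp n k * f)
      = ((if k = i then (1 : ℂ) else 0) - (if k = j then (1 : ℂ) else 0))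
          • T n b S a i j f := by
  have key : sigma n i ((sigma n j).symm (Hp n k * f))
      = (Hp n k + (C (if k = j then 1 else 0) - C (if k = i then 1 else 0)))
          * sigma n i ((sigma n j).symm f) := by
    rw [map_mul, map_mul, sigma_sigma_symm_Hp, C_sub]
  unfold T
  rw [key, smul_eq_C_mul, smul_eq_C_mul, smul_eq_C_mul, C_sub]
  ring
end

section
/- Suppose n+1 ∈ S. Then for every m̄ ∈ ℤ_{≥0}^{n+1} and every 1 ≤ j ≤ n+1, the following identity holds in R: a_j^{−1}·(m_j+1)·σ_j^{−1}(P_{m̄+ε_j}(S,a)) = P_{m̄}(S,a) if j ∈ S, and a_j^{−1}·(m_j+1)·σ_j^{−1}(P_{m̄+ε_j}(S,a)) = (h_j − b)·P_{m̄}(S,a) if j ∉ S. -/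
open MvPolynomial

/-- The scalar `a^{m̄}/m̄!`. -/
noncomputable def coef (n : ℕ) (a : Fin (n + 1) → ℂ) (m : Fin (n + 1) → ℕ) : ℂ :=
  (∏ j, a j ^ m j) / ((∏ j, (m j).factorial : ℕ) : ℂ)

/-- `P_{m̄}(S,a) = (a^{m̄}/m̄!) ∏_{s ∉ S} ∏_{k=1}^{m_s} (h_s - b - k)`. -/
noncomputable def Pm (n : ℕ) (b : ℂ) (S : Finset (Fin (n + 1))) (a : Fin (n + 1) → ℂ)
    (m : Fin (n + 1) → ℕ) : MvPolynomial (Fin n) ℂ :=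
  coef n a m • ∏ s ∈ Sᶜ, ∏ k ∈ Finset.range (m s), (Hp n s - C (b + k + 1))

/-- `P'_{m̄}(S,a) = (a^{m̄}/m̄!) ∏_{s∉S, s≠n+1} ∏_{k=1}^{m_s}(h_s - b - k) ⋅ C ⋅`
`∏_{t=1}^{m_{n+1}}(h_{n+1} + nb - t + 1)`, where
`C = ∏_{r=1}^{N-m_{n+1}}(h_{n+1} - b - 1 + r)` if `n+1 ∈ S` and `C = 1` otherwise. -/
noncomputable def P' (n : ℕ) (b : ℂ) (S : Finset (Fin (n + 1))) (a : Fin (n + 1) → ℂ)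
    (N : ℕ) (m : Fin (n + 1) → ℕ) : MvPolynomial (Fin n) ℂ :=
  coef n a m •
    ((∏ s ∈ Sᶜ.erase (Fin.last n), ∏ k ∈ Finset.range (m s), (Hp n s - C (b + k + 1)))
      * (if Fin.last n ∈ S then
            ∏ r ∈ Finset.range (N - m (Fin.last n)), (Hp n (Fin.last n) - C (b - r))
          else 1)
      * ∏ t ∈ Finset.range (m (Fin.last n)), (Hp n (Fin.last n) + C ((n : ℂ) * b - t)))

/-- `Δ_{m̄}(S,a) = (a^{m̄}/m̄!) ∏_{s∉S} ∏_{k=1}^{m_s}(h_s - b - k) ⋅`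
`∏_{r=2}^{N-m_{n+1}}(h_{n+1} - b - 2 + r) ⋅ ∏_{t=1}^{m_{n+1}}(h_{n+1} + nb - t)`. -/
noncomputable def Δm (n : ℕ) (b : ℂ) (S : Finset (Fin (n + 1))) (a : Fin (n + 1) → ℂ)
    (N : ℕ) (m : Fin (n + 1) → ℕ) : MvPolynomial (Fin n) ℂ :=
  coef n a m •
    ((∏ s ∈ Sᶜ, ∏ k ∈ Finset.range (m s), (Hp n s - C (b + k + 1)))
      * (∏ r ∈ Finset.range (N - m (Fin.last n) - 1), (Hp n (Fin.last n) - C (b - r)))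
      * ∏ t ∈ Finset.range (m (Fin.last n)), (Hp n (Fin.last n) + C ((n : ℂ) * b - t - 1)))

/-- `Θ_{m̄}(S,a) = (a^{m̄}/m̄!) ∏_{s∉S, s≠n+1} ∏_{k=1}^{m_s}(h_s - b - k) ⋅`
`∏_{k=1}^{m_{n+1}}(h_{n+1} - b - k - 1)`. -/
noncomputable def Θm (n : ℕ) (b : ℂ) (S : Finset (Fin (n + 1))) (a : Fin (n + 1) → ℂ)
    (m : Fin (n + 1) → ℕ) : MvPolynomial (Fin n) ℂ :=
  coef n a m •
    ((∏ s ∈ Sᶜ.erase (Fin.last n), ∏ k ∈ Finset.range (m s), (Hp n s - C (b + k + 1)))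
      * ∏ k ∈ Finset.range (m (Fin.last n)), (Hp n (Fin.last n) - C (b + k + 2)))

/-- `Υ_{m̄}(S,a) = (a^{m̄}/m̄!) ∏_{s∉S, s≠n+1} ∏_{k=1}^{m_s}(h_s - b - k) ⋅`
`∏_{t=1}^{m_{n+1}}(h_{n+1} + nb - t)`. -/
noncomputable def Υm (n : ℕ) (b : ℂ) (S : Finset (Fin (n + 1))) (a : Fin (n + 1) → ℂ)
    (m : Fin (n + 1) → ℕ) : MvPolynomial (Fin n) ℂ :=
  coef n a m •
    ((∏ s ∈ Sᶜ.erase (Fin.last n), ∏ k ∈ Finset.range (m s), (Hp n s - C (b + k + 1)))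
      * ∏ t ∈ Finset.range (m (Fin.last n)), (Hp n (Fin.last n) + C ((n : ℂ) * b - t - 1)))

/-- `h̄_i = h_i - δ_{i,n+1}`. -/
noncomputable def Hbar (n : ℕ) (i : Fin (n + 1)) : MvPolynomial (Fin n) ℂ :=
  Hp n i - if i = Fin.last n then 1 else 0

/-- The `(n+1) × (n+1)` matrix `A(λ,b,S,N)` with entries in `R`:
`A_{ii} = h̄_i - λ - N + 2` and, for `i ≠ j`,
`A_{ij} = (δ_{i∈S} + δ_{i∉S}(h̄_i - b)) (δ_{j∈S}(h̄_j - b) + δ_{j∉S})`. -/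
noncomputable def Amat (n : ℕ) (lam b : ℂ) (S : Finset (Fin (n + 1))) (N : ℕ) :
    Matrix (Fin (n + 1)) (Fin (n + 1)) (MvPolynomial (Fin n) ℂ) :=
  fun i j =>
    if i = j then Hbar n i - C (lam + N - 2)
    else (if i ∈ S then 1 else Hbar n i - C b) * (if j ∈ S then Hbar n j - C b else 1)

lemma coef_step (n : ℕ) (a : Fin (n + 1) → ℂ) (m : Fin (n + 1) → ℕ) (j : Fin (n + 1))
    (ha : a j ≠ 0) :
    (a j)⁻¹ * (m j + 1 : ℂ) * coef n a (fun l => m l + if l = j then 1 else 0)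
      = coef n a m := by
  unfold coef
  have h1 : (∏ l, a l ^ (m l + if l = j then 1 else 0)) = (∏ l, a l ^ m l) * a j := by
    simp only [pow_add, Finset.prod_mul_distrib]
    congr 1
    simp [pow_ite]
  have h2 : (∏ l, (m l + if l = j then 1 else 0).factorial)
      = (∏ l, (m l).factorial) * (m j + 1) := by
    have he : ∀ l, (m l + if l = j then 1 else 0).factorial
        = (m l).factorial * (if l = j then m j + 1 else 1) := by
      intro l
      by_cases hl : l = j <;> simp [hl, Nat.factorial_succ, mul_comm]
    rw [Finset.prod_congr rfl fun l _ => he l, Finset.prod_mul_distrib]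
    simp
  rw [h1, h2]
  have hF : ((∏ l, (m l).factorial : ℕ) : ℂ) ≠ 0 :=
    Nat.cast_ne_zero.mpr (Finset.prod_ne_zero_iff.mpr
      fun l _ => (Nat.factorial_pos (m l)).ne')
  have hm : ((m j : ℂ) + 1) ≠ 0 := Nat.cast_add_one_ne_zero (m j)
  have hF' : (∏ i : Fin (n + 1), ((m i).factorial : ℂ)) ≠ 0 := by push_cast at hF; exact hF
  rw [Nat.cast_mul, Nat.cast_add, Nat.cast_one]
  push_cast
  field_simp

lemma sigma_symm_apply (n : ℕ) (j : Fin (n + 1)) (hj : (j : ℕ) < n)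
    (p : MvPolynomial (Fin n) ℂ) :
    (sigma n j).symm p
      = aeval (fun k => X k + if k = ⟨j, hj⟩ then 1 else 0) p := by
  unfold sigma
  rw [dif_pos hj]
  rfl

lemma sigma_last (n : ℕ) : sigma n (Fin.last n) = AlgEquiv.refl := by
  unfold sigma
  rw [dif_neg]
  simp

/-- Lemma 7(1), first family of identities (`n+1 ∈ S`): for every `m̄` and `1 ≤ j ≤ n+1`,
`a_j⁻¹ (m_j+1) σ_j⁻¹(P_{m̄+ε_j}(S,a)) = P_{m̄}(S,a)` if `j ∈ S`, and
`= (h_j - b) P_{m̄}(S,a)` if `j ∉ S`. -/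
theorem statement12 (n : ℕ) (hn : 1 ≤ n) (b : ℂ) (S : Finset (Fin (n + 1)))
    (a : Fin (n + 1) → ℂ) (ha : ∀ j, a j ≠ 0) (halast : a (Fin.last n) = 1)
    (hS : Fin.last n ∈ S) (m : Fin (n + 1) → ℕ) (j : Fin (n + 1)) :
    ((a j)⁻¹ * (m j + 1 : ℂ)) •
        (sigma n j).symm (Pm n b S a (fun l => m l + if l = j then 1 else 0))
      = if j ∈ S then Pm n b S a m else (Hp n j - C b) * Pm n b S a m := by
  unfold Pm
  rw [map_smul, smul_smul]
  by_cases hjS : j ∈ S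
  · -- j ∈ S : the product is unchanged and fixed by σ_j⁻¹
    rw [if_pos hjS]
    have hprod : (∏ s ∈ Sᶜ, ∏ k ∈ Finset.range ((fun l => m l + if l = j then 1 else 0) s),
          (Hp n s - C (b + k + 1)))
        = ∏ s ∈ Sᶜ, ∏ k ∈ Finset.range (m s), (Hp n s - C (b + k + 1)) := by
      refine Finset.prod_congr rfl fun s hs => ?_
      have hsj : s ≠ j := fun h => (Finset.mem_compl.mp hs) (h ▸ hjS)
      simp [hsj]
    rw [hprod]
    have hfix : (sigma n j).symm
          (∏ s ∈ Sᶜ, ∏ k ∈ Finset.range (m s), (Hp n s - C (b + k + 1)))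
        = ∏ s ∈ Sᶜ, ∏ k ∈ Finset.range (m s), (Hp n s - C (b + k + 1)) := by
      by_cases hj : (j : ℕ) < n
      · rw [sigma_symm_apply n j hj, map_prod]
        refine Finset.prod_congr rfl fun s hs => ?_
        rw [map_prod]
        refine Finset.prod_congr rfl fun k _ => ?_
        have hsS : s ∉ S := Finset.mem_compl.mp hs
        have hsl : s ≠ Fin.last n := fun h => hsS (h ▸ hS)
        have hs' : (s : ℕ) < n := Fin.val_lt_last hsl
        have hne : (⟨(s : ℕ), hs'⟩ : Fin n) ≠ ⟨(j : ℕ), hj⟩ := by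
          intro h
          exact hsS ((Fin.ext (by simpa using congrArg Fin.val h) : s = j) ▸ hjS)
        rw [map_sub, aeval_C, algebraMap_eq]
        unfold Hp
        rw [dif_pos hs', aeval_X, if_neg hne, add_zero]
      · have hjl : j = Fin.last n := by
          refine Fin.ext ?_
          have h1 : (j : ℕ) ≤ n := Nat.lt_succ_iff.mp j.isLt
          simpa [Fin.val_last] using le_antisymm h1 (le_of_not_gt hj)
        rw [hjl, sigma_last]
        rfl
    rw [hfix, coef_step n a m j (ha j)]
  · -- j ∉ S
    rw [if_neg hjS, coef_step n a m j (ha j)]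
    have hjl : j ≠ Fin.last n := fun h => hjS (h ▸ hS)
    have hj : (j : ℕ) < n := Fin.val_lt_last hjl
    have hjC : j ∈ Sᶜ := Finset.mem_compl.mpr hjS
    have hsplit : ∀ f : Fin (n + 1) → ℕ,
        (∏ s ∈ Sᶜ, ∏ k ∈ Finset.range (f s), (Hp n s - C (b + k + 1)))
          = (∏ k ∈ Finset.range (f j), (Hp n j - C (b + k + 1)))
            * ∏ s ∈ Sᶜ.erase j, ∏ k ∈ Finset.range (f s), (Hp n s - C (b + k + 1)) :=
      fun f => (Finset.mul_prod_erase _ _ hjC).symm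
    have hkey : (sigma n j).symm
          (∏ s ∈ Sᶜ, ∏ k ∈ Finset.range ((fun l => m l + if l = j then 1 else 0) s),
            (Hp n s - C (b + k + 1)))
        = (Hp n j - C b) * ∏ s ∈ Sᶜ, ∏ k ∈ Finset.range (m s), (Hp n s - C (b + k + 1)) := by
      rw [hsplit, hsplit, sigma_symm_apply n j hj, map_mul, map_prod]
      have herase : (aeval fun k : Fin n => X k + if k = ⟨(j : ℕ), hj⟩ then 1 else 0)
            (∏ s ∈ Sᶜ.erase j,
              ∏ k ∈ Finset.range ((fun l => m l + if l = j then 1 else 0) s),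
                (Hp n s - C (b + k + 1)))
          = ∏ s ∈ Sᶜ.erase j, ∏ k ∈ Finset.range (m s), (Hp n s - C (b + k + 1)) := by
        rw [map_prod]
        refine Finset.prod_congr rfl fun s hs => ?_
        have hsj : s ≠ j := (Finset.mem_erase.mp hs).1
        have hsS : s ∉ S := Finset.mem_compl.mp (Finset.mem_erase.mp hs).2
        have hsl : s ≠ Fin.last n := fun h => hsS (h ▸ hS)
        have hs' : (s : ℕ) < n := Fin.val_lt_last hsl
        have hne : (⟨(s : ℕ), hs'⟩ : Fin n) ≠ ⟨(j : ℕ), hj⟩ := by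
          intro h
          exact hsj (Fin.ext (by simpa using congrArg Fin.val h))
        rw [map_prod]
        simp only [hsj, if_neg, if_false, add_zero]
        refine Finset.prod_congr rfl fun k _ => ?_
        rw [map_sub, aeval_C, algebraMap_eq]
        unfold Hp
        rw [dif_pos hs', aeval_X, if_neg hne, add_zero]
      rw [herase]
      have hjfac : ∀ k : ℕ,
          (aeval fun k : Fin n => X k + if k = ⟨(j : ℕ), hj⟩ then 1 else 0)
              (Hp n j - C (b + k + 1))
            = X (⟨(j : ℕ), hj⟩ : Fin n) - C (b + k) := by
        intro k
        rw [map_sub, aeval_C, algebraMap_eq]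
        unfold Hp
        rw [dif_pos hj, aeval_X, if_pos rfl,
          show (b + (k : ℂ) + 1) = (b + k) + 1 by ring, map_add, map_one]
        ring
      rw [if_pos rfl, Finset.prod_congr rfl fun k _ => hjfac k,
        Finset.prod_range_succ' (fun k : ℕ => X (⟨(j : ℕ), hj⟩ : Fin n) - C (b + k)) (m j)]
      have hHpj : Hp n j = X (⟨(j : ℕ), hj⟩ : Fin n) := by
        unfold Hp; rw [dif_pos hj]
      have hshift : (∏ k ∈ Finset.range (m j),
            (X (⟨(j : ℕ), hj⟩ : Fin n) - C (b + ((k + 1 : ℕ) : ℂ))))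
          = ∏ k ∈ Finset.range (m j), (X (⟨(j : ℕ), hj⟩ : Fin n) - C (b + k + 1)) :=
        Finset.prod_congr rfl fun k _ => by
          rw [show (b + ((k + 1 : ℕ) : ℂ)) = b + (k : ℂ) + 1 by push_cast; ring]
      rw [hshift]
      simp only [Nat.cast_zero, add_zero, hHpj]
      ring
    rw [hkey, mul_smul_comm]
end

section
/- For all λ, b ∈ ℂ, every subset S ⊆ {1,…,n+1} and every N ∈ ℤ_{≥0}, the determinant of the matrix A(λ,b,S,N) equals the constant polynomial (−nb − λ − N + 1)·(b − λ − N + 2)^n in R. -/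
open MvPolynomial

-- auxiliary lemmas

lemma sum_Hp (n : ℕ) : (∑ i : Fin (n + 1), Hp n i) = 0 := by
  unfold Hp
  rw [Fin.sum_univ_castSucc]
  simp [Fin.is_lt]

noncomputable def uAux (n : ℕ) (b : ℂ) (S : Finset (Fin (n + 1))) (i : Fin (n + 1)) :
    MvPolynomial (Fin n) ℂ := if i ∈ S then 1 else Hbar n i - C b

noncomputable def vAux (n : ℕ) (b : ℂ) (S : Finset (Fin (n + 1))) (j : Fin (n + 1)) :
    MvPolynomial (Fin n) ℂ := if j ∈ S then Hbar n j - C b else 1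

lemma sum_Hbar (n : ℕ) : (∑ i : Fin (n + 1), Hbar n i) = -1 := by
  unfold Hbar
  rw [Finset.sum_sub_distrib, sum_Hp]
  simp

/-- Lemma: `det A(λ,b,S,N) = (-nb - λ - N + 1)(b - λ - N + 2)^n` (a constant polynomial). -/
theorem statement16 (n : ℕ) (hn : 1 ≤ n) (lam b : ℂ) (S : Finset (Fin (n + 1))) (N : ℕ) :
    Matrix.det (Amat n lam b S N)
      = C ((-(n : ℂ) * b - lam - N + 1) * (b - lam - N + 2) ^ n) := by
  classical
  set R := MvPolynomial (Fin n) ℂ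
  set c : ℂ := b - lam - N + 2 with hc_def
  have huv : ∀ i, uAux n b S i * vAux n b S i = Hbar n i - C b := by
    intro i
    by_cases h : i ∈ S <;> simp [uAux, vAux, h]
  have hdot : (dotProduct (vAux n b S) (uAux n b S)) = C (-1 - (n + 1) * b) := by
    unfold dotProduct
    have : ∀ i, vAux n b S i * uAux n b S i = Hbar n i - C b := fun i => by
      rw [mul_comm]; exact huv i
    simp_rw [this]
    rw [Finset.sum_sub_distrib, sum_Hbar]
    simp only [Finset.sum_const, Finset.card_univ, Fintype.card_fin, nsmul_eq_mul]
    rw [C_sub, C_mul, C_neg, C_1, C_add, C_1, map_natCast]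
    push_cast
    ring
  have hAmat : ∀ i j, Amat n lam b S N i j
      = if i = j then Hbar n i - C (lam + ↑N - 2)
        else (if i ∈ S then 1 else Hbar n i - C b) * (if j ∈ S then Hbar n j - C b else 1) :=
    fun i j => rfl
  have hA : Amat n lam b S N
      = Matrix.of (fun i j => (if i = j then C c else 0) + uAux n b S i * vAux n b S j) := by
    refine Matrix.ext fun i j => ?_
    rw [hAmat, Matrix.of_apply]
    by_cases h : i = j
    · rw [if_pos h, if_pos h, h, huv j, hc_def]
      simp only [C_sub, C_add]
      ring
    · rw [if_neg h, if_neg h, zero_add]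
      rfl
  by_cases hc : c = 0
  · rw [hA]
    have h0 : (Matrix.of (fun i j => (if i = j then C c else 0) + uAux n b S i * vAux n b S j))
        = Matrix.of (fun i j => uAux n b S i * (Matrix.of (fun _ j => vAux n b S j)) i j) := by
      ext i j
      simp [hc]
    rw [h0, Matrix.det_mul_column]
    have hz : Matrix.det (Matrix.of (fun (_ : Fin (n+1)) j => vAux n b S j)) = 0 := by
      apply Matrix.det_zero_of_row_eq (i := 0) (j := 1)
      · exact Fin.ne_of_val_ne (by
          simp only [Fin.val_zero, Fin.val_one']
          rw [Nat.mod_eq_of_lt (by omega)]; omega)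
      · rfl
    rw [hz, mul_zero, hc, zero_pow (by omega : n ≠ 0), mul_zero, map_zero]
  · -- c ≠ 0 : matrix determinant lemma
    have hfac : Amat n lam b S N
        = (C c : R) • ((1 : Matrix (Fin (n+1)) (Fin (n+1)) R)
            + Matrix.replicateCol Unit (fun i => C c⁻¹ * uAux n b S i) * Matrix.replicateRow Unit (vAux n b S)) := by
      rw [hA]
      refine Matrix.ext fun i j => ?_
      have hcc : (C c : R) * C c⁻¹ = 1 := by
        rw [← C_mul, mul_inv_cancel₀ hc, C_1]
      have hmul : (Matrix.replicateCol Unit (fun i => (C c⁻¹ : R) * uAux n b S i) * Matrix.replicateRow Unit (vAux n b S)) i j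
          = C c⁻¹ * uAux n b S i * vAux n b S j := by
        rw [Matrix.mul_apply, Fintype.sum_unique, Matrix.replicateCol_apply, Matrix.replicateRow_apply]
      rw [Matrix.smul_apply, Matrix.add_apply, Matrix.one_apply, hmul, Matrix.of_apply,
        smul_eq_mul, mul_add, mul_ite, mul_one, mul_zero,
        show (C c : R) * (C c⁻¹ * uAux n b S i * vAux n b S j) = (C c * C c⁻¹) * (uAux n b S i * vAux n b S j) by ring,
        hcc, one_mul]
    rw [hfac, Matrix.det_smul, Matrix.det_one_add_replicateCol_mul_replicateRow]
    have hdot' : dotProduct (vAux n b S) (fun i => C c⁻¹ * uAux n b S i)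
        = C c⁻¹ * C (-1 - (n + 1) * b) := by
      unfold dotProduct
      rw [← hdot]
      unfold dotProduct
      rw [Finset.mul_sum]
      congr 1; ext i; ring
    rw [hdot', Fintype.card_fin]
    rw [← C_mul, ← C_1 (σ := Fin n), ← C_add, ← C_pow, ← C_mul]
    congr 1
    have hpow : c ^ (n + 1) = c * c ^ n := pow_succ' c n
    rw [hpow]
    field_simp
    rw [hc_def]
    ring
end
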